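/- Let b ∈ ℝ with 0 < b² < 1, ν_b = Γ(1 − b²)/Γ(1 + b²) (a positive real), ψ̂ ∈ ℝ, A_b ∈ ℂ. For j ∈ ℂ with b²(2j+1) ∉ ℤ and for σ ∈ {+1, −1} define A_σ(j) = A_b · ν_b^{−j−1/2} · Γ(−b²(2j+1)) · e^{−ψ̂(2j+1)σ}, set A^ε(j) = (A_{+1}(j) + (−1)^ε A_{−1}(j))/2 for ε ∈ {0,1}, and define R(j) = −ν_b^{2j+1} · Γ(1 + b²(2j+1))/Γ(1 − b²(2j+1)). Then for every such j and each ε ∈ {0,1}: A^ε(j) = (−1)^ε · R(−j−1) · A^ε(−j−1). -/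
import Mathlib


open Complex

/-- `ν_b = Γ(1-b²)/Γ(1+b²)`. -/
noncomputable def nub (b : ℝ) : ℝ := Real.Gamma (1 - b ^ 2) / Real.Gamma (1 + b ^ 2)

/-- `A_σ(j) = A_b ν_b^{-j-1/2} Γ(-b²(2j+1)) e^{-ψ̂(2j+1)σ}`. -/
noncomputable def Asig (b ψ : ℝ) (Ab : ℂ) (σ : ℝ) (j : ℂ) : ℂ :=
  Ab * ((nub b : ℝ) : ℂ) ^ (-j - 1/2) *
    Complex.Gamma (-(b : ℂ) ^ 2 * (2 * j + 1)) *
    Complex.exp (-(ψ : ℂ) * (2 * j + 1) * (σ : ℂ))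

/-- `A^ε(j) = (A_{+1}(j) + (-1)^ε A_{-1}(j))/2`. -/
noncomputable def Aeps (b ψ : ℝ) (Ab : ℂ) (ε : ℕ) (j : ℂ) : ℂ :=
  (Asig b ψ Ab 1 j + (-1 : ℂ) ^ ε * Asig b ψ Ab (-1) j) / 2

/-- The closed string reflection amplitude
`R(j) = -ν_b^{2j+1} Γ(1+b²(2j+1))/Γ(1-b²(2j+1))`. -/
noncomputable def Rrefl (b : ℝ) (j : ℂ) : ℂ :=
  -((nub b : ℝ) : ℂ) ^ (2 * j + 1) *
    Complex.Gamma (1 + (b : ℂ) ^ 2 * (2 * j + 1)) /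
    Complex.Gamma (1 - (b : ℂ) ^ 2 * (2 * j + 1))

lemma key_lemma (b ψ : ℝ) (h1 : 0 < b ^ 2) (h2 : b ^ 2 < 1) (Ab : ℂ) (σ : ℝ)
    (j : ℂ) (hj : (b : ℂ) ^ 2 * (2 * j + 1) ∉ Set.range (Int.cast : ℤ → ℂ)) :
    Asig b ψ Ab σ j = Rrefl b (-j - 1) * Asig b ψ Ab (-σ) (-j - 1) := by
  set x : ℂ := (b : ℂ) ^ 2 * (2 * j + 1) with hx
  have hx0 : x ≠ 0 := by
    intro h; exact hj ⟨0, by simp [h]⟩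
  have hΓx : Complex.Gamma x ≠ 0 := by
    apply Complex.Gamma_ne_zero
    intro m h
    exact hj ⟨-m, by push_cast [h]; ring⟩
  have hΓ1x : Complex.Gamma (1 + x) ≠ 0 := by
    apply Complex.Gamma_ne_zero
    intro m h
    exact hj ⟨-m - 1, by push_cast; rw [← h]; ring⟩
  have hG1 : Complex.Gamma (1 + x) = x * Complex.Gamma x := by
    rw [add_comm]; exact Complex.Gamma_add_one x hx0
  have hG2 : Complex.Gamma (1 - x) = -x * Complex.Gamma (-x) := by
    have := Complex.Gamma_add_one (-x) (neg_ne_zero.mpr hx0)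
    rw [← this]; ring_nf
  have hνpos : (0:ℝ) < nub b := by
    apply div_pos <;> exact Real.Gamma_pos_of_pos (by linarith)
  have hν : ((nub b : ℝ) : ℂ) ≠ 0 := by
    exact_mod_cast ne_of_gt hνpos
  have harg1 : -(b : ℂ) ^ 2 * (2 * (-j - 1) + 1) = x := by rw [hx]; ring
  have harg2 : (1 : ℂ) + (b : ℂ) ^ 2 * (2 * (-j - 1) + 1) = 1 - x := by rw [hx]; ring
  have harg3 : (1 : ℂ) - (b : ℂ) ^ 2 * (2 * (-j - 1) + 1) = 1 + x := by rw [hx]; ring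
  have hexp : -(ψ : ℂ) * (2 * (-j - 1) + 1) * ((-σ : ℝ) : ℂ)
      = -(ψ : ℂ) * (2 * j + 1) * (σ : ℂ) := by push_cast; ring
  unfold Asig Rrefl
  rw [harg1, harg2, harg3, hexp, hG1, hG2]
  rw [show -(b:ℂ)^2*(2*j+1) = -x from by rw [hx]; ring]
  field_simp
  have hpw : ((nub b:ℝ):ℂ) ^ ((-(j*2)-1)/2)
      = ((nub b:ℝ):ℂ) ^ (2*(-j-1)+1) * ((nub b:ℝ):ℂ) ^ (((1+j)*2-1)/2) := by
    rw [← Complex.cpow_add _ _ hν]; congr 1; ring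
  rw [hpw]
  ring

/-- For `0 < b² < 1`, real `ψ̂`, `A_b ∈ ℂ`, any `j` with
`b²(2j+1) ∉ ℤ` and `ε ∈ {0,1}`: `A^ε(j) = (-1)^ε R(-j-1) A^ε(-j-1)`. -/
theorem stmt_18 (b : ℝ) (h1 : 0 < b ^ 2) (h2 : b ^ 2 < 1) (ψ : ℝ) (Ab : ℂ)
    (j : ℂ) (hj : (b : ℂ) ^ 2 * (2 * j + 1) ∉ Set.range (Int.cast : ℤ → ℂ))
    (ε : ℕ) (hε : ε = 0 ∨ ε = 1) :
    Aeps b ψ Ab ε j = (-1 : ℂ) ^ ε * Rrefl b (-j - 1) * Aeps b ψ Ab ε (-j - 1) := by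
  have k1 := key_lemma b ψ h1 h2 Ab 1 j hj
  have k2 := key_lemma b ψ h1 h2 Ab (-1) j hj
  norm_num at k1 k2
  rcases hε with h | h <;> subst h <;> unfold Aeps <;>
    rw [k1, k2] <;> ring
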